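/- For every weighted tree T on n vertices with total edge weight L, there exists a 1-spanner of the tree metric of T with hop-diameter 2 and total edge weight at most n·L. -/

import Mathlib

/-- The weight of a walk in a graph with edge weights `w`. -/
noncomputable def walkWeight {V : Type*} {G : SimpleGraph V} (w : Sym2 V → ℝ)
    {u v : V} (p : G.Walk u v) : ℝ :=
  (p.darts.map (fun d => w s(d.toProd.1, d.toProd.2))).sum

/-- The unique path between two vertices of a tree. -/
noncomputable def treePath {V : Type*} {G : SimpleGraph V} (hG : G.IsTree) (u v : V) :
    G.Walk u v :=
  (hG.existsUnique_path u v).exists.choose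

/-- Distance in a weighted tree: the weight of the unique path. -/
noncomputable def treeDist {V : Type*} {G : SimpleGraph V} (hG : G.IsTree)
    (w : Sym2 V → ℝ) (u v : V) : ℝ :=
  walkWeight w (treePath hG u v)

/-- Total weight of a graph with edge weights `w`. -/
noncomputable def treeWeight {V : Type*} [Fintype V] (G : SimpleGraph V)
    (w : Sym2 V → ℝ) : ℝ := by
  classical exact ∑ e : Sym2 V, if e ∈ G.edgeSet then w e else 0

/-- Weight of a path (given as a list of vertices) with respect to a distance function. -/
def pathWeightD {V : Type*} (d : V → V → ℝ) (l : List V) : ℝ :=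
  ((l.zip l.tail).map (fun p => d p.1 p.2)).sum

/-- All consecutive pairs of the list are edges of `H` (in either orientation). -/
def ChainIn {V : Type*} (H : Finset (V × V)) (l : List V) : Prop :=
  l.Chain' (fun a b => (a, b) ∈ H ∨ (b, a) ∈ H)

/-- `H` is a `1`-spanner with hop-diameter `k` of the tree metric of `(G, w)`:
every pair of vertices is joined by a path in `H` of at most `k` edges whose
total weight equals their tree distance. -/
def IsKHopTreeSpanner {V : Type*} {G : SimpleGraph V} (hG : G.IsTree)
    (w : Sym2 V → ℝ) (k : ℕ) (H : Finset (V × V)) : Prop :=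
  ∀ u v : V, ∃ l : List V, l.head? = some u ∧ l.getLast? = some v ∧
    l.length ≤ k + 1 ∧ ChainIn H l ∧
    pathWeightD (treeDist hG w) l = treeDist hG w u v

/-- Total weight of a spanner whose edges are weighted by tree distance. -/
noncomputable def spannerWeight {V : Type*} {G : SimpleGraph V} (hG : G.IsTree)
    (w : Sym2 V → ℝ) (H : Finset (V × V)) : ℝ :=
  ∑ e ∈ H, treeDist hG w e.1 e.2

open SimpleGraph

section A
variable {V : Type*} {G : SimpleGraph V} (hG : G.IsTree) (w : Sym2 V → ℝ)

lemma treePath_isPath (u v : V) : (treePath hG u v).IsPath :=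
  (hG.existsUnique_path u v).exists.choose_spec

lemma treePath_unique {u v : V} (p : G.Walk u v) (hp : p.IsPath) : p = treePath hG u v :=
  (hG.existsUnique_path u v).unique hp (treePath_isPath hG u v)

lemma walkWeight_eq_edges {u v : V} (p : G.Walk u v) :
    walkWeight w p = (p.edges.map w).sum := by
  simp only [walkWeight, Walk.edges, List.map_map]
  rfl

lemma treePath_self (u : V) : treePath hG u u = Walk.nil :=
  (treePath_unique hG Walk.nil (Walk.IsPath.nil)).symm

lemma treeDist_self (u : V) : treeDist hG w u u = 0 := by
  simp [treeDist, treePath_self, walkWeight]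

lemma treeDist_nonneg (hw : ∀ e, 0 ≤ w e) (u v : V) : 0 ≤ treeDist hG w u v := by
  rw [treeDist, walkWeight_eq_edges]
  apply List.sum_nonneg
  intro x hx
  obtain ⟨e, _, rfl⟩ := List.mem_map.1 hx
  exact hw e

lemma treePath_reverse (u v : V) : (treePath hG u v).reverse = treePath hG v u :=
  treePath_unique hG _ ((treePath_isPath hG u v).reverse)

lemma treeDist_comm (u v : V) : treeDist hG w u v = treeDist hG w v u := by
  rw [treeDist, treeDist, walkWeight_eq_edges, walkWeight_eq_edges,
    ← treePath_reverse hG u v, Walk.edges_reverse, List.map_reverse, List.sum_reverse]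

variable [DecidableEq V]

lemma treePath_takeUntil {u v m : V} (h : m ∈ (treePath hG u v).support) :
    (treePath hG u v).takeUntil m h = treePath hG u m :=
  treePath_unique hG _ ((treePath_isPath hG u v).takeUntil h)

lemma treePath_dropUntil {u v m : V} (h : m ∈ (treePath hG u v).support) :
    (treePath hG u v).dropUntil m h = treePath hG m v :=
  treePath_unique hG _ ((treePath_isPath hG u v).dropUntil h)

lemma treeDist_add_of_mem {u v m : V} (h : m ∈ (treePath hG u v).support) :
    treeDist hG w u m + treeDist hG w m v = treeDist hG w u v := by
  conv_rhs => rw [treeDist, ← Walk.take_spec (treePath hG u v) h]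
  rw [treeDist, treeDist, walkWeight_eq_edges, walkWeight_eq_edges, walkWeight_eq_edges,
    Walk.edges_append, treePath_takeUntil hG h, treePath_dropUntil hG h, List.map_append,
    List.sum_append]

lemma treePath_length_le {u v : V} (p : G.Walk u v) :
    (treePath hG u v).length ≤ p.length := by
  rw [← treePath_unique hG p.bypass p.bypass_isPath]
  exact p.length_bypass_le

lemma treePath_support_subset_append {u v x : V} :
    ∀ m ∈ (treePath hG u x).support,
      m ∈ (treePath hG u v).support ∨ m ∈ (treePath hG v x).support := by
  intro m hm
  have hb : ((treePath hG u v).append (treePath hG v x)).bypass = treePath hG u x :=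
    treePath_unique hG _ (Walk.bypass_isPath _)
  rw [← hb] at hm
  have := Walk.support_bypass_subset _ hm
  rw [Walk.support_append] at this
  rcases List.mem_append.1 this with h | h
  · exact Or.inl h
  · exact Or.inr (List.mem_of_mem_tail h)

end A
open SimpleGraph

attribute [local instance] Classical.propDecidable

section B
variable {V : Type*} {G : SimpleGraph V} (hG : G.IsTree) (w : Sym2 V → ℝ)

/-- `S` is closed under tree paths. -/
def PClosed (hG : G.IsTree) (S : Finset V) : Prop :=
  ∀ u ∈ S, ∀ v ∈ S, ∀ x ∈ (treePath hG u v).support, x ∈ S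

lemma rel_symm {c u v : V} (h : c ∉ (treePath hG u v).support) :
    c ∉ (treePath hG v u).support := by
  rw [← treePath_reverse hG u v, Walk.support_reverse, List.mem_reverse]
  exact h

lemma rel_trans {c u v x : V} (h1 : c ∉ (treePath hG u v).support)
    (h2 : c ∉ (treePath hG v x).support) : c ∉ (treePath hG u x).support := by
  classical
  intro hc
  rcases treePath_support_subset_append hG c hc with h | h
  · exact h1 h
  · exact h2 h

/-- The class of `u` among `S \ {c}`. -/
noncomputable def Cls (hG : G.IsTree) (c u : V) (S : Finset V) : Finset V :=
  (S.erase c).filter (fun v => c ∉ (treePath hG u v).support)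

lemma mem_Cls {c u v : V} {S : Finset V} :
    v ∈ Cls hG c u S ↔ v ∈ S.erase c ∧ c ∉ (treePath hG u v).support := by
  simp [Cls]

lemma mem_Cls_self {c u : V} {S : Finset V} (hu : u ∈ S.erase c) : u ∈ Cls hG c u S := by
  rw [mem_Cls]
  refine ⟨hu, ?_⟩
  rw [treePath_self]
  simp [Walk.support_nil]
  exact fun h => (Finset.mem_erase.1 hu).1 h.symm

lemma Cls_eq_of_mem {c u v : V} {S : Finset V} (hv : v ∈ Cls hG c u S) :
    Cls hG c u S = Cls hG c v S := by
  rw [mem_Cls] at hv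
  ext x
  rw [mem_Cls, mem_Cls]
  constructor
  · rintro ⟨hx, hr⟩
    exact ⟨hx, rel_trans hG (rel_symm hG hv.2) hr⟩
  · rintro ⟨hx, hr⟩
    exact ⟨hx, rel_trans hG hv.2 hr⟩

lemma Cls_subset {c u : V} {S : Finset V} : Cls hG c u S ⊆ S :=
  fun x hx => Finset.mem_of_mem_erase ((mem_Cls hG).1 hx).1

lemma PClosed_Cls {c u : V} {S : Finset V} (hcl : PClosed hG S) (hc : c ∈ S)
    (hu : u ∈ S.erase c) : PClosed hG (Cls hG c u S) := by
  intro x hx y hy m hm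
  rw [mem_Cls] at hx hy ⊢
  have hxS : x ∈ S := Finset.mem_of_mem_erase hx.1
  have hyS : y ∈ S := Finset.mem_of_mem_erase hy.1
  have hmS : m ∈ S := hcl x hxS y hyS m hm
  -- c ∉ path x y
  have hxy : c ∉ (treePath hG x y).support :=
    rel_trans hG (rel_symm hG hx.2) hy.2
  -- path x m is a prefix of path x y
  classical
  have hxm : c ∉ (treePath hG x m).support := by
    intro hcm
    rw [← treePath_takeUntil hG hm] at hcm
    exact hxy (Walk.support_takeUntil_subset _ hm hcm)
  have hmc : m ≠ c := fun h => hxm (h ▸ Walk.end_mem_support _)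
  exact ⟨Finset.mem_erase.2 ⟨hmc, hmS⟩, rel_trans hG hx.2 hxm⟩

lemma exists_centroid {S : Finset V} (hS : S.Nonempty) (hcl : PClosed hG S) :
    ∃ c ∈ S, ∀ u ∈ S.erase c, 2 * (Cls hG c u S).card ≤ S.card := by
  classical
  obtain ⟨c, hcS, hmin⟩ := S.exists_min_image (fun c => ∑ v ∈ S, (treePath hG c v).length) hS
  refine ⟨c, hcS, fun u hu => ?_⟩
  set C := Cls hG c u S with hC
  have hCS : C ⊆ S := Cls_subset hG
  have hcu : c ≠ u := fun h => (Finset.mem_erase.1 hu).1 h.symm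
  have huS : u ∈ S := Finset.mem_of_mem_erase hu
  -- get the neighbor c' of c towards u
  have hnil : ¬ (treePath hG c u).Nil := Walk.not_nil_of_ne hcu
  obtain ⟨c', hadj, q, hq⟩ := Walk.not_nil_iff.1 hnil
  have hqpath : q.IsPath ∧ c ∉ q.support := by
    have := treePath_isPath hG c u
    rw [hq, Walk.cons_isPath_iff] at this
    exact this
  have hqeq : q = treePath hG c' u := treePath_unique hG q hqpath.1
  have hc'S : c' ∈ S := by
    refine hcl c hcS u huS c' ?_
    rw [hq, Walk.support_cons]
    exact List.mem_cons_of_mem _ (q.start_mem_support)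
  have hrelc'u : c ∉ (treePath hG c' u).support := hqeq ▸ hqpath.2
  -- pointwise facts
  have hpt1 : ∀ v ∈ C, (treePath hG c' v).length + 1 = (treePath hG c v).length := by
    intro v hv
    rw [mem_Cls] at hv
    have hrel : c ∉ (treePath hG c' v).support :=
      rel_trans hG hrelc'u hv.2
    have : Walk.cons hadj (treePath hG c' v) = treePath hG c v := by
      apply treePath_unique
      rw [Walk.cons_isPath_iff]
      exact ⟨treePath_isPath hG c' v, hrel⟩
    rw [← this, Walk.length_cons]
  have hpt2 : ∀ v : V, (treePath hG c' v).length ≤ (treePath hG c v).length + 1 := by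
    intro v
    have := treePath_length_le hG (Walk.cons hadj.symm (treePath hG c v))
    rwa [Walk.length_cons] at this
  -- sums
  have hsplit : ∀ g : V → ℕ, ∑ v ∈ S \ C, g v + ∑ v ∈ C, g v = ∑ v ∈ S, g v :=
    fun g => Finset.sum_sdiff hCS
  have hX : ∑ v ∈ C, (treePath hG c' v).length + C.card = ∑ v ∈ C, (treePath hG c v).length := by
    calc ∑ v ∈ C, (treePath hG c' v).length + C.card
        = ∑ v ∈ C, ((treePath hG c' v).length + 1) := by
          rw [Finset.sum_add_distrib, Finset.sum_const, smul_eq_mul, mul_one]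
      _ = ∑ v ∈ C, (treePath hG c v).length := Finset.sum_congr rfl hpt1
  have hY : ∑ v ∈ S \ C, (treePath hG c' v).length ≤
      ∑ v ∈ S \ C, (treePath hG c v).length + (S \ C).card := by
    calc ∑ v ∈ S \ C, (treePath hG c' v).length
        ≤ ∑ v ∈ S \ C, ((treePath hG c v).length + 1) :=
          Finset.sum_le_sum (fun v _ => hpt2 v)
      _ = _ := by rw [Finset.sum_add_distrib, Finset.sum_const, smul_eq_mul, mul_one]
  have hmin' := hmin c' hc'S
  rw [← hsplit (fun v => (treePath hG c v).length),
    ← hsplit (fun v => (treePath hG c' v).length)] at hmin'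
  have hcard : (S \ C).card = S.card - C.card := Finset.card_sdiff_of_subset hCS
  have hCle : C.card ≤ S.card := Finset.card_le_card hCS
  omega
end B

section C
variable {V : Type*} {G : SimpleGraph V} (hG : G.IsTree) (w : Sym2 V → ℝ)

lemma adj_mem_or (c : V) {a b : V} (hab : G.Adj a b) :
    a ∈ (treePath hG b c).support ∨ b ∈ (treePath hG a c).support := by
  by_cases hb : b ∈ (treePath hG a c).support
  · exact Or.inr hb
  · left
    have h : Walk.cons hab.symm (treePath hG a c) = treePath hG b c := by
      apply treePath_unique
      rw [Walk.cons_isPath_iff]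
      exact ⟨treePath_isPath hG a c, hb⟩
    rw [← h, Walk.support_cons]
    exact List.mem_cons_of_mem _ (Walk.start_mem_support _)

lemma edge_side {a b c : V} (hab : G.Adj a b) (ha : a ∈ (treePath hG b c).support) :
    b ≠ c ∧ ∀ v : V, s(a, b) ∈ (treePath hG v c).edges →
      v ≠ c ∧ c ∉ (treePath hG v b).support := by
  have hbc : b ≠ c := by
    rintro rfl
    rw [treePath_self hG b] at ha
    simp only [Walk.support_nil, List.mem_singleton] at ha
    subst ha
    exact hab.ne rfl
  refine ⟨hbc, fun v he => ?_⟩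
  have hvc : v ≠ c := by
    rintro rfl
    rw [treePath_self hG v] at he
    simp [Walk.edges_nil] at he
  have hb : b ∈ (treePath hG v c).support := Walk.snd_mem_support_of_mem_edges _ he
  refine ⟨hvc, ?_⟩
  intro hcsup
  have hnodup := (treePath_isPath hG v c).support_nodup
  have hsupp : (treePath hG v c).support
      = ((treePath hG v c).takeUntil b hb).support
        ++ ((treePath hG v c).dropUntil b hb).support.tail := by
    rw [← Walk.support_append, Walk.take_spec]
  rw [hsupp] at hnodup
  have hdis := List.disjoint_of_nodup_append hnodup
  have hc1 : c ∈ ((treePath hG v c).takeUntil b hb).support := by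
    rw [treePath_takeUntil hG hb]; exact hcsup
  have hc2 : c ∈ ((treePath hG v c).dropUntil b hb).support.tail := by
    rw [treePath_dropUntil hG hb]
    exact Walk.end_mem_tail_support_of_ne hbc _
  exact hdis hc1 hc2

variable [Fintype V]

/-- Edges of `G` with both endpoints in `S`. -/
noncomputable def ES (G : SimpleGraph V) (S : Finset V) : Finset (Sym2 V) :=
  G.edgeFinset.filter (fun e => ∀ x ∈ e, x ∈ S)

noncomputable def LW (G : SimpleGraph V) (w : Sym2 V → ℝ) (S : Finset V) : ℝ :=
  ∑ e ∈ ES G S, w e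

lemma mem_ES {S : Finset V} {e : Sym2 V} :
    e ∈ ES G S ↔ e ∈ G.edgeSet ∧ ∀ x ∈ e, x ∈ S := by
  simp [ES, SimpleGraph.mem_edgeFinset]

lemma LW_nonneg (hw : ∀ e, 0 ≤ w e) (S : Finset V) : 0 ≤ LW G w S :=
  Finset.sum_nonneg (fun e _ => hw e)

lemma ES_mono {S T : Finset V} (h : S ⊆ T) : ES G S ⊆ ES G T := by
  intro e he
  rw [mem_ES] at he ⊢
  exact ⟨he.1, fun x hx => h (he.2 x hx)⟩

lemma LW_mono (hw : ∀ e, 0 ≤ w e) {S T : Finset V} (h : S ⊆ T) : LW G w S ≤ LW G w T :=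
  Finset.sum_le_sum_of_subset_of_nonneg (ES_mono h) (fun e _ _ => hw e)

lemma treeDist_eq_sum_ES {S : Finset V} (hcl : PClosed hG S) {u v : V}
    (hu : u ∈ S) (hv : v ∈ S) :
    treeDist hG w u v = ∑ e ∈ ES G S, if e ∈ (treePath hG u v).edges then w e else 0 := by
  classical
  rw [treeDist, walkWeight_eq_edges]
  simp only [← List.mem_toFinset]
  rw [Finset.sum_ite_mem]
  have hsub : (treePath hG u v).edges.toFinset ⊆ ES G S := by
    intro e he
    rw [List.mem_toFinset] at he
    rw [mem_ES]
    refine ⟨Walk.edges_subset_edgeSet _ he, ?_⟩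
    induction e using Sym2.ind with
    | _ a b =>
      intro x hx
      rw [Sym2.mem_iff] at hx
      rcases hx with rfl | rfl
      · exact hcl u hu v hv x (Walk.fst_mem_support_of_mem_edges _ he)
      · exact hcl u hu v hv x (Walk.snd_mem_support_of_mem_edges _ he)
  rw [Finset.inter_eq_right.mpr hsub]
  exact (List.sum_toFinset w ((treePath_isPath hG u v).isTrail.edges_nodup)).symm

lemma count_le {S : Finset V} (hcl : PClosed hG S) {c : V} (hc : c ∈ S)
    (hcent : ∀ u ∈ S.erase c, 2 * (Cls hG c u S).card ≤ S.card)
    {a b : V} (hab : G.Adj a b) (hbS : b ∈ S)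
    (ha : a ∈ (treePath hG b c).support) :
    2 * (S.filter (fun v => s(a, b) ∈ (treePath hG v c).edges)).card ≤ S.card := by
  obtain ⟨hbc, hside⟩ := edge_side hG hab ha
  have hsub : S.filter (fun v => s(a, b) ∈ (treePath hG v c).edges) ⊆ Cls hG c b S := by
    intro v hv
    rw [Finset.mem_filter] at hv
    obtain ⟨hvS, hve⟩ := hv
    obtain ⟨hvc, hrel⟩ := hside v hve
    rw [mem_Cls]
    exact ⟨Finset.mem_erase.2 ⟨hvc, hvS⟩, rel_symm hG hrel⟩
  calc 2 * (S.filter (fun v => s(a, b) ∈ (treePath hG v c).edges)).card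
      ≤ 2 * (Cls hG c b S).card := by
        exact Nat.mul_le_mul_left 2 (Finset.card_le_card hsub)
    _ ≤ S.card := hcent b (Finset.mem_erase.2 ⟨hbc, hbS⟩)

lemma count_le' {S : Finset V} (hcl : PClosed hG S) {c : V} (hc : c ∈ S)
    (hcent : ∀ u ∈ S.erase c, 2 * (Cls hG c u S).card ≤ S.card)
    {e : Sym2 V} (he : e ∈ ES G S) :
    2 * (S.filter (fun v => e ∈ (treePath hG v c).edges)).card ≤ S.card := by
  rw [mem_ES] at he
  induction e using Sym2.ind with
  | _ a b =>
    have hab : G.Adj a b := he.1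
    have haS : a ∈ S := he.2 a (Sym2.mem_mk_left a b)
    have hbS : b ∈ S := he.2 b (Sym2.mem_mk_right a b)
    rcases adj_mem_or hG c hab with h | h
    · exact count_le hG hcl hc hcent hab hbS h
    · have hswap : s(a, b) = s(b, a) := Sym2.eq_swap
      rw [hswap]
      exact count_le hG hcl hc hcent hab.symm haS h

lemma star_sum_le {S : Finset V} (hcl : PClosed hG S) {c : V} (hc : c ∈ S)
    (hcent : ∀ u ∈ S.erase c, 2 * (Cls hG c u S).card ≤ S.card)
    (hw : ∀ e, 0 ≤ w e) :
    2 * ∑ v ∈ S, treeDist hG w v c ≤ (S.card : ℝ) * LW G w S := by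
  classical
  have h1 : ∑ v ∈ S, treeDist hG w v c
      = ∑ e ∈ ES G S, ((S.filter (fun v => e ∈ (treePath hG v c).edges)).card : ℝ) * w e := by
    calc ∑ v ∈ S, treeDist hG w v c
        = ∑ v ∈ S, ∑ e ∈ ES G S, (if e ∈ (treePath hG v c).edges then w e else 0) :=
          Finset.sum_congr rfl (fun v hv => treeDist_eq_sum_ES hG w hcl hv hc)
      _ = ∑ e ∈ ES G S, ∑ v ∈ S, (if e ∈ (treePath hG v c).edges then w e else 0) :=
          Finset.sum_comm
      _ = ∑ e ∈ ES G S, ((S.filter (fun v => e ∈ (treePath hG v c).edges)).card : ℝ) * w e := by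
          refine Finset.sum_congr rfl (fun e he => ?_)
          rw [← Finset.sum_filter, Finset.sum_const, nsmul_eq_mul]
  rw [h1, LW, Finset.mul_sum, Finset.mul_sum]
  refine Finset.sum_le_sum (fun e he => ?_)
  have h2 := count_le' hG hcl hc hcent he
  calc 2 * (((S.filter (fun v => e ∈ (treePath hG v c).edges)).card : ℝ) * w e)
      = ((2 * (S.filter (fun v => e ∈ (treePath hG v c).edges)).card : ℕ) : ℝ) * w e := by
        push_cast; ring
    _ ≤ (S.card : ℝ) * w e := by
        apply mul_le_mul_of_nonneg_right _ (hw e)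
        exact_mod_cast h2

lemma sum_LW_classes_le {S : Finset V} {c : V} (hw : ∀ e, 0 ≤ w e) :
    ∑ C ∈ (S.erase c).image (fun u => Cls hG c u S), LW G w C ≤ LW G w S := by
  classical
  set K := (S.erase c).image (fun u => Cls hG c u S) with hK
  have hvdisj : ∀ C₁ ∈ K, ∀ C₂ ∈ K, C₁ ≠ C₂ → Disjoint C₁ C₂ := by
    intro C₁ h1 C₂ h2 hne
    rw [hK, Finset.mem_image] at h1 h2
    obtain ⟨u₁, hu₁, rfl⟩ := h1
    obtain ⟨u₂, hu₂, rfl⟩ := h2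
    rw [Finset.disjoint_left]
    intro v hv1 hv2
    exact hne ((Cls_eq_of_mem hG hv1).trans (Cls_eq_of_mem hG hv2).symm)
  have hdisj : (↑K : Set (Finset V)).PairwiseDisjoint (fun C => ES G C) := by
    intro C₁ h1 C₂ h2 hne
    rw [Finset.mem_coe] at h1 h2
    show Disjoint (ES G C₁) (ES G C₂)
    rw [Finset.disjoint_left]
    intro e he1 he2
    rw [mem_ES] at he1 he2
    induction e using Sym2.ind with
    | _ a b =>
      have ha1 : a ∈ C₁ := he1.2 a (Sym2.mem_mk_left a b)
      have ha2 : a ∈ C₂ := he2.2 a (Sym2.mem_mk_left a b)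
      exact Finset.disjoint_left.1 (hvdisj C₁ h1 C₂ h2 hne) ha1 ha2
  calc ∑ C ∈ K, LW G w C = ∑ e ∈ K.biUnion (fun C => ES G C), w e :=
        (Finset.sum_biUnion hdisj).symm
    _ ≤ LW G w S := by
        apply Finset.sum_le_sum_of_subset_of_nonneg _ (fun e _ _ => hw e)
        intro e he
        rw [Finset.mem_biUnion] at he
        obtain ⟨C, hC, heC⟩ := he
        rw [hK, Finset.mem_image] at hC
        obtain ⟨u, hu, rfl⟩ := hC
        exact ES_mono (Cls_subset hG) heC

end C

section D
variable {V : Type*} {G : SimpleGraph V} (hG : G.IsTree) (w : Sym2 V → ℝ)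

def SpanP (hG : G.IsTree) (w : Sym2 V → ℝ) (H : Finset (V × V)) (u v : V) : Prop :=
  ∃ l : List V, l.head? = some u ∧ l.getLast? = some v ∧
    l.length ≤ 3 ∧ ChainIn H l ∧
    pathWeightD (treeDist hG w) l = treeDist hG w u v

lemma ChainIn_mono {H H' : Finset (V × V)} (h : H ⊆ H') {l : List V} (hl : ChainIn H l) :
    ChainIn H' l :=
  List.IsChain.imp (fun a b hab => hab.imp (fun x => h x) (fun x => h x)) hl

lemma SpanP_mono {H H' : Finset (V × V)} (h : H ⊆ H') {u v : V}
    (hs : SpanP hG w H u v) : SpanP hG w H' u v := by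
  obtain ⟨l, h1, h2, h3, h4, h5⟩ := hs
  exact ⟨l, h1, h2, h3, ChainIn_mono h h4, h5⟩

lemma spannerWeight_union_le (hw : ∀ e, 0 ≤ w e) (A B : Finset (V × V)) :
    spannerWeight hG w (A ∪ B) ≤ spannerWeight hG w A + spannerWeight hG w B := by
  classical
  have h := Finset.sum_union_inter (s₁ := A) (s₂ := B) (f := fun e => treeDist hG w e.1 e.2)
  have h0 : 0 ≤ ∑ e ∈ A ∩ B, treeDist hG w e.1 e.2 :=
    Finset.sum_nonneg (fun e _ => treeDist_nonneg hG w hw _ _)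
  simp only [spannerWeight]
  linarith

lemma spannerWeight_biUnion_le (hw : ∀ e, 0 ≤ w e) {ι : Type*} [DecidableEq ι]
    (K : Finset ι) (f : ι → Finset (V × V)) :
    spannerWeight hG w (K.biUnion f) ≤ ∑ C ∈ K, spannerWeight hG w (f C) := by
  classical
  induction K using Finset.induction with
  | empty => simp [spannerWeight]
  | @insert a s ha ih =>
    rw [Finset.biUnion_insert, Finset.sum_insert ha]
    calc spannerWeight hG w (f a ∪ s.biUnion f)
        ≤ spannerWeight hG w (f a) + spannerWeight hG w (s.biUnion f) :=
          spannerWeight_union_le hG w hw _ _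
      _ ≤ _ := by linarith

variable [Fintype V]

lemma main_induction (hw : ∀ e, 0 ≤ w e) :
    ∀ n (S : Finset V), S.card ≤ n → PClosed hG S →
      ∃ H : Finset (V × V), (∀ u ∈ S, ∀ v ∈ S, SpanP hG w H u v) ∧
        spannerWeight hG w H ≤ (S.card : ℝ) * LW G w S := by
  intro n
  induction n with
  | zero =>
    intro S hS _
    have hSe : S = ∅ := Finset.card_eq_zero.1 (Nat.le_zero.1 hS)
    subst hSe
    exact ⟨∅, by simp, by simp [spannerWeight]⟩
  | succ n IH =>
    intro S hS hcl
    rcases Finset.eq_empty_or_nonempty S with rfl | hne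
    · exact ⟨∅, by simp, by simp [spannerWeight]⟩
    obtain ⟨c, hcS, hcent⟩ := exists_centroid hG hne hcl
    classical
    set K := (S.erase c).image (fun u => Cls hG c u S) with hK
    have hrec : ∀ C ∈ K, C.card ≤ n ∧ PClosed hG C := by
      intro C hC
      rw [hK, Finset.mem_image] at hC
      obtain ⟨u, hu, rfl⟩ := hC
      constructor
      · have h1 : Cls hG c u S ⊆ S.erase c := Finset.filter_subset _ _
        have h2 := Finset.card_le_card h1
        have h3 := Finset.card_erase_of_mem hcS
        omega
      · exact PClosed_Cls hG hcl hcS hu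
    let f : Finset V → Finset (V × V) := fun C =>
      if h : C.card ≤ n ∧ PClosed hG C then (IH C h.1 h.2).choose else ∅
    have hf : ∀ C ∈ K, (∀ u ∈ C, ∀ v ∈ C, SpanP hG w (f C) u v) ∧
        spannerWeight hG w (f C) ≤ (C.card : ℝ) * LW G w C := by
      intro C hC
      have h := hrec C hC
      simp only [f, dif_pos h]
      exact (IH C h.1 h.2).choose_spec
    refine ⟨(S.image (fun v => (v, c))) ∪ K.biUnion f, ?_, ?_⟩
    · -- spanner property
      intro u huS v hvS
      by_cases hcuv : c ∈ (treePath hG u v).support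
      · refine ⟨[u, c, v], rfl, by simp, by norm_num, ?_, ?_⟩
        · have h1 : (u, c) ∈ (S.image (fun v => (v, c))) ∪ K.biUnion f :=
            Finset.mem_union_left _ (Finset.mem_image_of_mem _ huS)
          have h2 : (v, c) ∈ (S.image (fun v => (v, c))) ∪ K.biUnion f :=
            Finset.mem_union_left _ (Finset.mem_image_of_mem _ hvS)
          simp only [ChainIn, List.isChain_cons_cons, List.isChain_singleton, and_true]
          exact List.isChain_cons_cons.2 ⟨Or.inl h1, List.isChain_cons_cons.2 ⟨Or.inr h2, List.isChain_singleton _⟩⟩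
        · have h := treeDist_add_of_mem hG w hcuv
          simp only [pathWeightD, List.zip, List.tail, List.zipWith, List.map, List.sum_cons,
            List.sum_nil]
          linarith
      · have huc : u ≠ c := fun h => hcuv (h ▸ Walk.start_mem_support _)
        have hvc : v ≠ c := fun h => hcuv (h ▸ Walk.end_mem_support _)
        have huE : u ∈ S.erase c := Finset.mem_erase.2 ⟨huc, huS⟩
        have hCK : Cls hG c u S ∈ K := by rw [hK]; exact Finset.mem_image_of_mem _ huE
        have hu' : u ∈ Cls hG c u S := mem_Cls_self hG huE
        have hv' : v ∈ Cls hG c u S :=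
          (mem_Cls hG).2 ⟨Finset.mem_erase.2 ⟨hvc, hvS⟩, hcuv⟩
        have hsub : f (Cls hG c u S) ⊆ (S.image (fun v => (v, c))) ∪ K.biUnion f :=
          (Finset.subset_biUnion_of_mem f hCK).trans Finset.subset_union_right
        exact SpanP_mono hG w hsub ((hf _ hCK).1 u hu' v hv')
    · -- weight bound
      have hstar : spannerWeight hG w (S.image (fun v => (v, c)))
          ≤ ∑ v ∈ S, treeDist hG w v c := by
        rw [spannerWeight, Finset.sum_image]
        · intro x _ y _ hxy
          exact (Prod.ext_iff.1 hxy).1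
      have hstar2 := star_sum_le hG w hcl hcS hcent hw
      have hbu : spannerWeight hG w (K.biUnion f) ≤ ∑ C ∈ K, spannerWeight hG w (f C) :=
        spannerWeight_biUnion_le hG w hw K f
      have hcls : ∑ C ∈ K, spannerWeight hG w (f C) ≤ ((S.card : ℝ) / 2) * LW G w S := by
        have h1 : ∀ C ∈ K, spannerWeight hG w (f C) ≤ ((S.card : ℝ) / 2) * LW G w C := by
          intro C hC
          refine le_trans ((hf C hC).2) ?_
          apply mul_le_mul_of_nonneg_right _ (LW_nonneg w hw C)
          rw [hK, Finset.mem_image] at hC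
          obtain ⟨u, hu, rfl⟩ := hC
          have := hcent u hu
          rw [le_div_iff₀ (by norm_num : (0:ℝ) < 2)]
          calc ((Cls hG c u S).card : ℝ) * 2 = ((2 * (Cls hG c u S).card : ℕ) : ℝ) := by
                push_cast; ring
            _ ≤ (S.card : ℝ) := by exact_mod_cast this
        calc ∑ C ∈ K, spannerWeight hG w (f C)
            ≤ ∑ C ∈ K, ((S.card : ℝ) / 2) * LW G w C := Finset.sum_le_sum h1
          _ = ((S.card : ℝ) / 2) * ∑ C ∈ K, LW G w C := by rw [Finset.mul_sum]
          _ ≤ ((S.card : ℝ) / 2) * LW G w S := by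
              apply mul_le_mul_of_nonneg_left (sum_LW_classes_le hG w hw)
              positivity
      have htotal : spannerWeight hG w ((S.image (fun v => (v, c))) ∪ K.biUnion f)
          ≤ spannerWeight hG w (S.image (fun v => (v, c)))
            + spannerWeight hG w (K.biUnion f) := spannerWeight_union_le hG w hw _ _
      linarith

lemma treeWeight_eq_LW_univ : treeWeight G w = LW G w Finset.univ := by
  classical
  rw [treeWeight, LW]
  rw [← Finset.sum_filter]
  congr 1
  ext e
  simp [ES, SimpleGraph.mem_edgeFinset]

end D

/-- every weighted tree on `n` vertices with total edge weight `L` admits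
a `1`-spanner of its tree metric with hop-diameter `2` and total edge weight at most `n * L`. -/
theorem stmt3 {V : Type*} [Fintype V] (G : SimpleGraph V) (hG : G.IsTree)
    (w : Sym2 V → ℝ) (hw : ∀ e, 0 ≤ w e) :
    ∃ H : Finset (V × V), IsKHopTreeSpanner hG w 2 H ∧
      spannerWeight hG w H ≤ (Fintype.card V : ℝ) * treeWeight G w := by
  classical
  obtain ⟨H, hspan, hwt⟩ := main_induction hG w hw (Fintype.card V) Finset.univ
    (by rw [Finset.card_univ]) (fun _ _ _ _ x _ => Finset.mem_univ x)
  refine ⟨H, ?_, ?_⟩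
  · intro u v
    exact hspan u (Finset.mem_univ u) v (Finset.mem_univ v)
  · rw [treeWeight_eq_LW_univ]
    rw [Finset.card_univ] at hwt
    exact hwt
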